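/- Let d ≥ 1, z > 0, k₀ > 0, θ > 0. Let R ∈ C²(ℝ^d, ℝ) attain its global maximum at 0, with Hessian Ξ = ∇²R(0). Let Γ̂ ∈ L¹(ℝ^{2d}, ℂ), and let η : (0,1) → (0,∞) satisfy η(ε) → 0 as ε → 0⁺. Then for all r, x, y ∈ ℝ^d, lim_{ε→0⁺} ∫_{ℝ^{2d}} Γ̂(ζ,ξ) exp(i r·ζ) exp(i η(ε) ε ξ·(x−y)/θ) exp(i η(ε) ε ζ·(x+y)/2) exp(−i z η(ε) ε ξ·ζ/(k₀θ)) exp( (k₀²z/(4η(ε)²)) ∫_0^1 [ R(η(ε)(y − x + (sz/k₀)ζ)) − R(0) ] ds ) dξ dζ/(2π)^{2d} = ∫_{ℝ^{2d}} Γ̂(ζ,ξ) exp(i r·ζ) exp( (k₀²z/8) ∫_0^1 (y − x + (sz/k₀)ζ)ᵀ Ξ (y − x + (sz/k₀)ζ) ds ) dξ dζ/(2π)^{2d}. -/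

import Mathlib

open MeasureTheory Filter Matrix

private lemma taylor2 {d : ℕ} (R : (Fin d → ℝ) → ℝ) (hR : ContDiff ℝ 2 R)
    (hf0 : fderiv ℝ R 0 = 0) (v : Fin d → ℝ) :
    Tendsto (fun h : ℝ => (R (h • v) - R 0) / h ^ 2) (nhdsWithin 0 (Set.Ioi 0))
      (nhds (fderiv ℝ (fderiv ℝ R) 0 v v / 2)) := by
  have hRd : Differentiable ℝ R := hR.differentiable (by norm_num)
  have hR1 : ContDiff ℝ 1 (fderiv ℝ R) := hR.fderiv_right (le_refl _)
  have hsm : ∀ h : ℝ, HasDerivAt (fun t : ℝ => t • v) v h := fun h => by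
    simpa using (hasDerivAt_id h).smul_const v
  have hff' : ∀ h : ℝ, HasDerivAt (fun t => R (t • v) - R 0) (fderiv ℝ R (h • v) v) h := by
    intro h
    have := ((hRd (h • v)).hasFDerivAt.comp_hasDerivAt h (hsm h))
    simpa using this.sub_const (R 0)
  have hψ : HasDerivAt (fun t : ℝ => fderiv ℝ R (t • v) v)
      (fderiv ℝ (fderiv ℝ R) 0 v v) (0 : ℝ) := by
    have h1 : HasDerivAt (fun t : ℝ => fderiv ℝ R (t • v)) (fderiv ℝ (fderiv ℝ R) 0 v) 0 := by
      have h0 : HasFDerivAt (fderiv ℝ R) (fderiv ℝ (fderiv ℝ R) 0) ((0:ℝ) • v) := by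
        simpa using (hR1.differentiable one_ne_zero (0 : Fin d → ℝ)).hasFDerivAt
      exact h0.comp_hasDerivAt 0 (hsm 0)
    exact ((ContinuousLinearMap.apply ℝ ℝ v).hasFDerivAt.comp_hasDerivAt 0 h1)
  have hslope : Tendsto (fun h : ℝ => fderiv ℝ R (h • v) v / h) (nhdsWithin 0 (Set.Ioi 0))
      (nhds (fderiv ℝ (fderiv ℝ R) 0 v v)) := by
    have := hasDerivAt_iff_tendsto_slope.mp hψ
    have h2 : Tendsto (slope (fun t : ℝ => fderiv ℝ R (t • v) v) 0)
        (nhdsWithin 0 (Set.Ioi 0)) (nhds (fderiv ℝ (fderiv ℝ R) 0 v v)) :=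
      this.mono_left (nhdsWithin_mono 0 (fun x hx => ne_of_gt hx))
    refine h2.congr' ?_
    filter_upwards [self_mem_nhdsWithin] with h hh
    simp [slope, hf0, div_eq_inv_mul]
  apply HasDerivAt.lhopital_zero_nhdsGT
    (f' := fun h => fderiv ℝ R (h • v) v) (g' := fun h => 2 * h)
  · exact Eventually.of_forall hff'
  · exact Eventually.of_forall (fun h => by simpa using (hasDerivAt_pow 2 h))
  · filter_upwards [self_mem_nhdsWithin] with h hh
    exact mul_ne_zero two_ne_zero (ne_of_gt hh)
  · have : Tendsto (fun h : ℝ => R (h • v) - R 0) (nhds 0) (nhds (R ((0:ℝ) • v) - R 0)) :=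
      ((hRd.continuous.comp (continuous_id.smul continuous_const)).sub continuous_const).tendsto 0
    simpa using this.mono_left nhdsWithin_le_nhds
  · have : Tendsto (fun h : ℝ => h ^ 2) (nhds 0) (nhds ((0:ℝ) ^ 2)) := (continuous_pow 2).tendsto 0
    simpa using this.mono_left nhdsWithin_le_nhds
  · have := hslope.div_const 2
    refine this.congr' ?_ |>.mono_right (by norm_num)
    filter_upwards with h
    rw [div_div]
    ring_nf


private 
lemma quadbound {d : ℕ} (R : (Fin d → ℝ) → ℝ) (hR : ContDiff ℝ 2 R)
    (hf0 : fderiv ℝ R 0 = 0) (M : ℝ) (hM : 0 ≤ M) :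
    ∃ C : ℝ, 0 ≤ C ∧ ∀ w : Fin d → ℝ, ‖w‖ ≤ M → |R w - R 0| ≤ C * ‖w‖ ^ 2 := by
  have hRd : Differentiable ℝ R := hR.differentiable (by norm_num)
  have hR1 : ContDiff ℝ 1 (fderiv ℝ R) := hR.fderiv_right (le_refl _)
  have hcont : ContinuousOn (fun u => ‖fderiv ℝ (fderiv ℝ R) u‖)
      (Metric.closedBall (0 : Fin d → ℝ) M) :=
    ((hR1.continuous_fderiv one_ne_zero).norm).continuousOn
  obtain ⟨C, hC⟩ := (isCompact_closedBall (0 : Fin d → ℝ) M).exists_bound_of_continuousOn hcont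
  have hC0 : 0 ≤ C := le_trans (norm_nonneg _) (hC 0 (Metric.mem_closedBall_self hM))
  refine ⟨C, hC0, fun w hw => ?_⟩
  -- first: ‖fderiv R u‖ ≤ C * ‖u‖ on the ball
  have key : ∀ u : Fin d → ℝ, ‖u‖ ≤ M → ‖fderiv ℝ R u‖ ≤ C * ‖u‖ := by
    intro u hu
    have := (convex_closedBall (0 : Fin d → ℝ) M).norm_image_sub_le_of_norm_fderiv_le
      (f := fderiv ℝ R) (fun p _ => (hR1.differentiable one_ne_zero).differentiableAt)
      (C := C) (fun p hp => by
        have h : |‖fderiv ℝ (fderiv ℝ R) p‖| ≤ C := by simpa using hC p hp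
        exact (le_abs_self _).trans h) (Metric.mem_closedBall_self hM)
      (by simpa [Metric.mem_closedBall, dist_eq_norm] using hu)
    simpa [hf0] using this
  have := (convex_closedBall (0 : Fin d → ℝ) ‖w‖).norm_image_sub_le_of_norm_fderiv_le
    (f := R) (fun p _ => hRd.differentiableAt)
    (C := C * ‖w‖)
    (fun p hp => by
      have hpw : ‖p‖ ≤ ‖w‖ := by simpa [Metric.mem_closedBall, dist_eq_norm] using hp
      exact le_trans (key p (hpw.trans hw)) (by nlinarith [norm_nonneg p]))
    (Metric.mem_closedBall_self (norm_nonneg w))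
    (by simp [Metric.mem_closedBall, dist_eq_norm] : w ∈ Metric.closedBall (0 : Fin d → ℝ) ‖w‖)
  calc |R w - R 0| = ‖R w - R 0‖ := rfl
    _ ≤ C * ‖w‖ * ‖w - 0‖ := this
    _ = C * ‖w‖ ^ 2 := by rw [sub_zero]; ring

private lemma inner_limit {d : ℕ} (z k₀ : ℝ) (hz : 0 < z) (hk : 0 < k₀)
    (R : (Fin d → ℝ) → ℝ) (hR : ContDiff ℝ 2 R) (hf0 : fderiv ℝ R 0 = 0)
    (η : ℝ → ℝ)
    (hη01 : ∀ᶠ ε in nhdsWithin 0 (Set.Ioi (0:ℝ)), 0 < η ε ∧ η ε ≤ 1)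
    (hηto : Tendsto η (nhdsWithin 0 (Set.Ioi (0:ℝ))) (nhdsWithin 0 (Set.Ioi 0)))
    (w p : Fin d → ℝ) :
    Tendsto (fun ε => (k₀ ^ 2 * z / (4 * (η ε) ^ 2)) *
        ∫ s in (0:ℝ)..1, (R (η ε • (w + (s * z / k₀) • p)) - R 0))
      (nhdsWithin 0 (Set.Ioi (0:ℝ)))
      (nhds ((k₀ ^ 2 * z / 8) *
        ∫ s in (0:ℝ)..1, fderiv ℝ (fderiv ℝ R) 0 (w + (s * z / k₀) • p)
          (w + (s * z / k₀) • p))) := by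
  set v : ℝ → (Fin d → ℝ) := fun s => w + (s * z / k₀) • p with hv
  set M : ℝ := ‖w‖ + (z / k₀) * ‖p‖ with hMdef
  have hM : 0 ≤ M := by positivity
  have hvM : ∀ s ∈ Set.Icc (0:ℝ) 1, ‖v s‖ ≤ M := by
    intro s hs
    have h1 : ‖v s‖ ≤ ‖w‖ + ‖(s * z / k₀) • p‖ := norm_add_le _ _
    have h2 : ‖(s * z / k₀) • p‖ = |s * z / k₀| * ‖p‖ := by
      rw [norm_smul]; rfl
    have h3 : |s * z / k₀| ≤ z / k₀ := by
      rw [abs_of_nonneg (div_nonneg (mul_nonneg hs.1 hz.le) hk.le)]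
      have hsz : s * z ≤ z := by nlinarith [hs.1, hs.2]
      gcongr

    calc ‖v s‖ ≤ ‖w‖ + |s * z / k₀| * ‖p‖ := by rw [← h2]; exact h1
      _ ≤ M := by
        rw [hMdef]
        have := mul_le_mul_of_nonneg_right h3 (norm_nonneg p)
        linarith
  obtain ⟨C, hC0, hC⟩ := quadbound R hR hf0 M hM
  have hconts : ∀ c : ℝ, Continuous fun s : ℝ => R (c • v s) - R 0 := by
    intro c
    exact ((hR.continuous).comp (by fun_prop)).sub continuous_const
  have hDCT : Tendsto (fun ε => ∫ s in (0:ℝ)..1, (R (η ε • v s) - R 0) / (η ε) ^ 2)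
      (nhdsWithin 0 (Set.Ioi (0:ℝ)))
      (nhds (∫ s in (0:ℝ)..1,
        fderiv ℝ (fderiv ℝ R) 0 (v s) (v s) / 2)) := by
    apply intervalIntegral.tendsto_integral_filter_of_dominated_convergence
      (bound := fun _ => C * M ^ 2)
    · filter_upwards with ε
      exact (((hconts (η ε)).div_const _)).aestronglyMeasurable.restrict
    · filter_upwards [hη01] with ε hε
      filter_upwards with s hs
      have hs' : s ∈ Set.Icc (0:ℝ) 1 := by
        rw [Set.uIoc_of_le (by norm_num : (0:ℝ) ≤ 1)] at hs
        exact ⟨le_of_lt hs.1, hs.2⟩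
      have hnorm : ‖η ε • v s‖ ≤ M := by
        rw [norm_smul]
        have : |η ε| ≤ 1 := by rw [abs_of_pos hε.1]; exact hε.2
        calc ‖η ε‖ * ‖v s‖ ≤ 1 * M :=
          mul_le_mul this (hvM s hs') (norm_nonneg _) zero_le_one
        _ = M := one_mul M
      have hb := hC (η ε • v s) hnorm
      have hn2 : ‖η ε • v s‖ ^ 2 = (η ε) ^ 2 * ‖v s‖ ^ 2 := by
        rw [norm_smul]
        rw [Real.norm_eq_abs, mul_pow, sq_abs]
      rw [hn2] at hb
      have hvs2 : ‖v s‖ ^ 2 ≤ M ^ 2 := by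
        have := hvM s hs'
        nlinarith [norm_nonneg (v s)]
      have hη2 : (0:ℝ) < (η ε) ^ 2 := pow_pos hε.1 2
      rw [norm_div, Real.norm_eq_abs, Real.norm_eq_abs, abs_of_pos hη2,
        div_le_iff₀ hη2]
      calc |R (η ε • v s) - R 0| ≤ C * ((η ε) ^ 2 * ‖v s‖ ^ 2) := hb
        _ ≤ C * M ^ 2 * (η ε) ^ 2 := by
            nlinarith [mul_le_mul_of_nonneg_left hvs2 (mul_nonneg hC0 hη2.le)]
    · exact intervalIntegrable_const
    · filter_upwards with s _
      exact (taylor2 R hR hf0 (v s)).comp hηto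
  have h4 : (0:ℝ) < 4 := by norm_num
  have main := hDCT.const_mul (k₀ ^ 2 * z / 4)
  have heq2 : (k₀ ^ 2 * z / 4) * ∫ s in (0:ℝ)..1,
      fderiv ℝ (fderiv ℝ R) 0 (v s) (v s) / 2
      = (k₀ ^ 2 * z / 8) * ∫ s in (0:ℝ)..1, fderiv ℝ (fderiv ℝ R) 0 (v s) (v s) := by
    rw [intervalIntegral.integral_div]; ring
  rw [heq2] at main
  refine main.congr' ?_
  filter_upwards [hη01] with ε hε
  have hηne : (η ε) ^ 2 ≠ 0 := (pow_pos hε.1 2).ne'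
  rw [intervalIntegral.integral_div]
  simp only [hv]
  ring

private lemma norm_exp_I_mul (t : ℝ) : ‖Complex.exp (Complex.I * (t : ℂ))‖ = 1 := by
  rw [Complex.norm_exp]
  simp

private lemma norm_exp_neg_I_mul (t : ℝ) : ‖Complex.exp (-Complex.I * (t : ℂ))‖ = 1 := by
  rw [Complex.norm_exp]
  simp

private lemma norm_exp_ofReal (a : ℝ) : ‖Complex.exp ((a : ℂ))‖ = Real.exp a := by
  rw [Complex.norm_exp]
  simp

private lemma tendsto_exp_I_mul :
    Tendsto (fun t : ℝ => Complex.exp (Complex.I * (t : ℂ))) (nhds 0) (nhds 1) := by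
  have h : Continuous fun t : ℝ => Complex.exp (Complex.I * (t : ℂ)) :=
    Complex.continuous_exp.comp (continuous_const.mul Complex.continuous_ofReal)
  simpa using h.tendsto 0

private lemma tendsto_exp_neg_I_mul :
    Tendsto (fun t : ℝ => Complex.exp (-Complex.I * (t : ℂ))) (nhds 0) (nhds 1) := by
  have h : Continuous fun t : ℝ => Complex.exp (-Complex.I * (t : ℂ)) :=
    Complex.continuous_exp.comp (continuous_const.mul Complex.continuous_ofReal)
  simpa using h.tendsto 0

/-- Diffusive-regime (`η → 0`) limit of the rescaled second moment of the wave field for a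
partially coherent source with `β = 1`: the limiting moment depends on the medium only
through the Hessian `Ξ = ∇²R(0)` of its covariance at `0`. -/
theorem diffusive_second_moment_limit (d : ℕ) (hd : 1 ≤ d)
    (z k₀ θ : ℝ) (hz : 0 < z) (hk : 0 < k₀) (hθ : 0 < θ)
    (R : (Fin d → ℝ) → ℝ) (hR : ContDiff ℝ 2 R) (hmax : ∀ x : Fin d → ℝ, R x ≤ R 0)
    (Γhat : (Fin d → ℝ) × (Fin d → ℝ) → ℂ) (hΓ : Integrable Γhat)
    (η : ℝ → ℝ) (hηpos : ∀ ε : ℝ, 0 < ε → ε < 1 → 0 < η ε)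
    (hηlim : Tendsto η (nhdsWithin 0 (Set.Ioi 0)) (nhds 0))
    (r x y : Fin d → ℝ) :
    Tendsto (fun ε : ℝ =>
        (1 / (2 * Real.pi) ^ (2 * d)) *
          ∫ q : (Fin d → ℝ) × (Fin d → ℝ),
            Γhat q * Complex.exp (Complex.I * ((q.1 ⬝ᵥ r : ℝ) : ℂ)) *
            Complex.exp (Complex.I * ((η ε * ε * (q.2 ⬝ᵥ (x - y)) / θ : ℝ) : ℂ)) *
            Complex.exp (Complex.I * ((η ε * ε * (q.1 ⬝ᵥ (x + y)) / 2 : ℝ) : ℂ)) *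
            Complex.exp (-Complex.I *
              ((z * η ε * ε * (q.2 ⬝ᵥ q.1) / (k₀ * θ) : ℝ) : ℂ)) *
            Complex.exp ((((k₀ ^ 2 * z / (4 * (η ε) ^ 2)) *
              ∫ s in (0:ℝ)..1,
                (R (η ε • (y - x + (s * z / k₀) • q.1)) - R 0) : ℝ) : ℂ)))
      (nhdsWithin 0 (Set.Ioi 0))
      (nhds ((1 / (2 * Real.pi) ^ (2 * d)) *
          ∫ q : (Fin d → ℝ) × (Fin d → ℝ),
            Γhat q * Complex.exp (Complex.I * ((q.1 ⬝ᵥ r : ℝ) : ℂ)) *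
            Complex.exp ((((k₀ ^ 2 * z / 8) *
              ∫ s in (0:ℝ)..1,
                fderiv ℝ (fderiv ℝ R) 0 (y - x + (s * z / k₀) • q.1)
                  (y - x + (s * z / k₀) • q.1) : ℝ) : ℂ)))) := by
  have hf0 : fderiv ℝ R 0 = 0 :=
    IsLocalMax.fderiv_eq_zero (Filter.Eventually.of_forall hmax)
  have hη01 : ∀ᶠ ε in nhdsWithin (0:ℝ) (Set.Ioi 0), 0 < η ε ∧ η ε ≤ 1 := by
    have h1 : ∀ᶠ ε in nhdsWithin (0:ℝ) (Set.Ioi 0), ε ∈ Set.Ioo (0:ℝ) 1 :=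
      Ioo_mem_nhdsGT_of_mem ⟨le_refl 0, zero_lt_one⟩
    have h2 : ∀ᶠ ε in nhdsWithin (0:ℝ) (Set.Ioi 0), η ε < 1 :=
      hηlim (Iio_mem_nhds one_pos)
    filter_upwards [h1, h2] with ε hε hη
    exact ⟨hηpos ε hε.1 hε.2, le_of_lt hη⟩
  have hηto : Tendsto η (nhdsWithin (0:ℝ) (Set.Ioi 0)) (nhdsWithin 0 (Set.Ioi 0)) :=
    tendsto_nhdsWithin_of_tendsto_nhds_of_eventually_within η hηlim
      (hη01.mono fun ε hε => hε.1)
  have hεto : Tendsto (fun ε : ℝ => ε) (nhdsWithin (0:ℝ) (Set.Ioi 0)) (nhds 0) :=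
    tendsto_id.mono_right nhdsWithin_le_nhds
  have hηε : Tendsto (fun ε => η ε * ε) (nhdsWithin (0:ℝ) (Set.Ioi 0)) (nhds 0) := by
    simpa using hηlim.mul hεto
  refine Filter.Tendsto.const_mul _ ?_
  apply MeasureTheory.tendsto_integral_filter_of_dominated_convergence
    (bound := fun q => ‖Γhat q‖)
  · -- measurability
    filter_upwards with ε
    have hc1 : Continuous fun q : (Fin d → ℝ) × (Fin d → ℝ) =>
        Complex.exp (Complex.I * ((q.1 ⬝ᵥ r : ℝ) : ℂ)) := by
      apply Complex.continuous_exp.comp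
      exact continuous_const.mul (Complex.continuous_ofReal.comp
        (continuous_fst.dotProduct continuous_const))
    have hc2 : Continuous fun q : (Fin d → ℝ) × (Fin d → ℝ) =>
        Complex.exp (Complex.I * ((η ε * ε * (q.2 ⬝ᵥ (x - y)) / θ : ℝ) : ℂ)) := by
      apply Complex.continuous_exp.comp
      exact continuous_const.mul (Complex.continuous_ofReal.comp
        (((continuous_const.mul (continuous_snd.dotProduct
          continuous_const)).div_const θ)))
    have hc3 : Continuous fun q : (Fin d → ℝ) × (Fin d → ℝ) =>
        Complex.exp (Complex.I * ((η ε * ε * (q.1 ⬝ᵥ (x + y)) / 2 : ℝ) : ℂ)) := by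
      apply Complex.continuous_exp.comp
      exact continuous_const.mul (Complex.continuous_ofReal.comp
        (((continuous_const.mul (continuous_fst.dotProduct
          continuous_const)).div_const 2)))
    have hc4 : Continuous fun q : (Fin d → ℝ) × (Fin d → ℝ) =>
        Complex.exp (-Complex.I * ((z * η ε * ε * (q.2 ⬝ᵥ q.1) / (k₀ * θ) : ℝ) : ℂ)) := by
      apply Complex.continuous_exp.comp
      exact continuous_const.mul (Complex.continuous_ofReal.comp
        (((continuous_const.mul (continuous_snd.dotProduct
          continuous_fst)).div_const (k₀ * θ))))
    have hc5 : Continuous fun q : (Fin d → ℝ) × (Fin d → ℝ) =>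
        Complex.exp ((((k₀ ^ 2 * z / (4 * (η ε) ^ 2)) *
          ∫ s in (0:ℝ)..1, (R (η ε • (y - x + (s * z / k₀) • q.1)) - R 0) : ℝ) : ℂ)) := by
      apply Complex.continuous_exp.comp
      apply Complex.continuous_ofReal.comp
      apply Continuous.mul continuous_const
      apply intervalIntegral.continuous_parametric_intervalIntegral_of_continuous'
        (f := fun (q : (Fin d → ℝ) × (Fin d → ℝ)) (s : ℝ) =>
          R (η ε • (y - x + (s * z / k₀) • q.1)) - R 0)
      apply Continuous.sub ?_ continuous_const
      apply hR.continuous.comp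
      fun_prop
    exact ((((hΓ.1.mul hc1.aestronglyMeasurable).mul hc2.aestronglyMeasurable).mul
      hc3.aestronglyMeasurable).mul hc4.aestronglyMeasurable).mul hc5.aestronglyMeasurable
  · -- bound
    filter_upwards [hη01] with ε hε
    filter_upwards with q
    have hintle : (∫ s in (0:ℝ)..1, (R (η ε • (y - x + (s * z / k₀) • q.1)) - R 0)) ≤ 0 := by
      have h0 : (0:ℝ) ≤ ∫ s in (0:ℝ)..1, (R 0 - R (η ε • (y - x + (s * z / k₀) • q.1))) :=
        intervalIntegral.integral_nonneg (by norm_num)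
          (fun u _ => sub_nonneg.mpr (hmax _))
      have heq : (∫ s in (0:ℝ)..1, (R (η ε • (y - x + (s * z / k₀) • q.1)) - R 0))
          = - ∫ s in (0:ℝ)..1, (R 0 - R (η ε • (y - x + (s * z / k₀) • q.1))) := by
        rw [← intervalIntegral.integral_neg]
        congr 1
        funext s
        ring
      rw [heq]
      linarith
    have hcpos : 0 ≤ k₀ ^ 2 * z / (4 * (η ε) ^ 2) := by positivity
    have hexple : ‖Complex.exp ((((k₀ ^ 2 * z / (4 * (η ε) ^ 2)) *
        ∫ s in (0:ℝ)..1, (R (η ε • (y - x + (s * z / k₀) • q.1)) - R 0) : ℝ) : ℂ))‖ ≤ 1 := by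
      rw [norm_exp_ofReal]
      apply Real.exp_le_one_iff.mpr
      exact mul_nonpos_of_nonneg_of_nonpos hcpos hintle
    simp only [norm_mul, norm_exp_I_mul, norm_exp_neg_I_mul, mul_one, one_mul]
    exact mul_le_of_le_one_right (norm_nonneg _) hexple
  · exact hΓ.norm
  · -- pointwise limit
    filter_upwards with q
    have h2 : Tendsto (fun ε => Complex.exp (Complex.I *
        ((η ε * ε * (q.2 ⬝ᵥ (x - y)) / θ : ℝ) : ℂ))) (nhdsWithin (0:ℝ) (Set.Ioi 0)) (nhds 1) :=
      tendsto_exp_I_mul.comp (by simpa using (hηε.mul_const (q.2 ⬝ᵥ (x - y))).div_const θ)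
    have h3 : Tendsto (fun ε => Complex.exp (Complex.I *
        ((η ε * ε * (q.1 ⬝ᵥ (x + y)) / 2 : ℝ) : ℂ))) (nhdsWithin (0:ℝ) (Set.Ioi 0)) (nhds 1) :=
      tendsto_exp_I_mul.comp (by simpa using (hηε.mul_const (q.1 ⬝ᵥ (x + y))).div_const 2)
    have h4 : Tendsto (fun ε => Complex.exp (-Complex.I *
        ((z * η ε * ε * (q.2 ⬝ᵥ q.1) / (k₀ * θ) : ℝ) : ℂ)))
        (nhdsWithin (0:ℝ) (Set.Ioi 0)) (nhds 1) := by
      apply tendsto_exp_neg_I_mul.comp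
      have : Tendsto (fun ε => z * (η ε * ε)) (nhdsWithin (0:ℝ) (Set.Ioi 0)) (nhds 0) := by
        simpa using hηε.const_mul z
      have h' := (this.mul_const (q.2 ⬝ᵥ q.1)).div_const (k₀ * θ)
      simp only [zero_mul, mul_zero, zero_div] at h'
      convert h' using 2 with ε
      ring
    have h5r := inner_limit z k₀ hz hk R hR hf0 η hη01 hηto (y - x) q.1
    have h5 : Tendsto (fun ε => Complex.exp ((((k₀ ^ 2 * z / (4 * (η ε) ^ 2)) *
        ∫ s in (0:ℝ)..1, (R (η ε • (y - x + (s * z / k₀) • q.1)) - R 0) : ℝ) : ℂ)))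
        (nhdsWithin (0:ℝ) (Set.Ioi 0))
        (nhds (Complex.exp ((((k₀ ^ 2 * z / 8) *
          ∫ s in (0:ℝ)..1, fderiv ℝ (fderiv ℝ R) 0 (y - x + (s * z / k₀) • q.1)
            (y - x + (s * z / k₀) • q.1) : ℝ) : ℂ)))) :=
      (Complex.continuous_exp.comp Complex.continuous_ofReal).continuousAt.tendsto.comp h5r
    have hfull := ((((tendsto_const_nhds (x := Γhat q *
        Complex.exp (Complex.I * ((q.1 ⬝ᵥ r : ℝ) : ℂ)))).mul h2).mul h3).mul h4).mul h5
    simpa using hfull
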